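/- Let $y : \mathbb{R} \to \mathbb{R}$ be a $C^2$ function defined on all of $\mathbb{R}$ satisfying $y''(r) \le -a e^{-2y(r)}$ for all $r$, where $a > 0$ is a constant. Then no such function exists; i.e., any solution of this differential inequality must fail to be defined for all $r \in \mathbb{R}$. -/

import Mathlib

open Real Set

lemma key (a : ℝ) (ha : 0 < a) (y : ℝ → ℝ) (hy : ContDiff ℝ 2 y)
    (h : ∀ r : ℝ, deriv (deriv y) r ≤ -a * Real.exp (-2 * y r))
    (r₀ : ℝ) (hneg : deriv y r₀ < 0) : False := by
  have hy1 : Differentiable ℝ y := hy.differentiable two_ne_zero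
  have hy2 : ContDiff ℝ 1 (deriv y) := by
    have := (contDiff_succ_iff_deriv.mp (by norm_num at hy ⊢; exact hy : ContDiff ℝ (1+1) y))
    exact this.2.2
  have hy1' : Differentiable ℝ (deriv y) := hy2.differentiable one_ne_zero
  have hdd : ∀ r, deriv (deriv y) r < 0 := fun r =>
    (h r).trans_lt (by nlinarith [Real.exp_pos (-2 * y r)])
  have hanti : StrictAnti (deriv y) := strictAnti_of_deriv_neg hdd
  obtain ⟨m, hm⟩ : ∃ m, m = deriv y r₀ := ⟨_, rfl⟩
  have hmneg : m < 0 := hm ▸ hneg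
  -- Step A : linear bound
  have stepA : ∀ r ≥ r₀, y r ≤ y r₀ + m * (r - r₀) := by
    intro r hr
    have hA : AntitoneOn (fun r => y r - m * r) (Ici r₀) := by
      apply antitoneOn_of_deriv_nonpos (convex_Ici r₀)
      · exact (hy1.continuous.sub (continuous_const.mul continuous_id)).continuousOn
      · exact ((hy1.sub ((differentiable_const m).mul differentiable_id)).differentiableOn)
      · intro x hx
        rw [interior_Ici] at hx
        have hd : HasDerivAt (fun r => y r - m * r) (deriv y x - m * 1) x :=
          (hy1 x).hasDerivAt.sub ((hasDerivAt_id x).const_mul m)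
        rw [hd.deriv]
        have := hanti (mem_Ioi.mp hx)
        rw [← hm] at this
        linarith
    have := hA (mem_Ici.mpr le_rfl) (mem_Ici.mpr hr) hr
    simp only at this
    linarith
  have hyneg : ∀ r ≥ r₀, deriv y r ≤ m := by
    intro r hr
    rcases eq_or_lt_of_le hr with rfl | hlt
    · exact hm.ge
    · rw [hm]; exact (hanti hlt).le
  -- Step B : energy monotone
  have hEmono : MonotoneOn (fun r => (deriv y r)^2 - a * Real.exp (-2 * y r)) (Ici r₀) := by
    apply monotoneOn_of_deriv_nonneg (convex_Ici r₀)
    · exact ((hy1'.continuous.pow 2).sub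
        (continuous_const.mul (Real.continuous_exp.comp
          (continuous_const.mul hy1.continuous)))).continuousOn
    · intro x _
      exact (((hy1' x).pow 2).sub
        (((hy1 x).const_mul (-2)).exp.const_mul a)).differentiableWithinAt
    · intro x hx
      rw [interior_Ici] at hx
      have h1 : HasDerivAt (fun r => (deriv y r)^2 - a * Real.exp (-2 * y r))
          (2 * deriv y x ^ 1 * deriv (deriv y) x
            - a * (Real.exp (-2 * y x) * (-2 * deriv y x))) x :=
        (((hy1' x).hasDerivAt.pow 2).sub
          ((((hy1 x).hasDerivAt.const_mul (-2)).exp).const_mul a))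
      rw [h1.deriv]
      have hyx : deriv y x < 0 := lt_of_le_of_lt (hyneg x (le_of_lt hx)) hmneg
      have hx2 := h x
      have he := Real.exp_pos (-2 * y x)
      nlinarith
  have stepB : ∀ r ≥ r₀, a * Real.exp (-2 * y r) - a * Real.exp (-2 * y r₀) ≤ (deriv y r)^2 := by
    intro r hr
    have := hEmono (mem_Ici.mpr le_rfl) (mem_Ici.mpr hr) hr
    simp only at this
    nlinarith [sq_nonneg (deriv y r₀)]
  -- Step C
  obtain ⟨r₁, hr₁⟩ : ∃ r₁, r₁ = r₀ + Real.log 2 / (2 * (-m)) := ⟨_, rfl⟩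
  have hlogpos : 0 ≤ Real.log 2 / (2 * (-m)) :=
    div_nonneg (Real.log_nonneg one_le_two) (by linarith)
  have hr₀r₁ : r₀ ≤ r₁ := by rw [hr₁]; linarith
  have hne : m ≠ 0 := ne_of_lt hmneg
  have stepC : ∀ r ≥ r₁, deriv y r ≤ -Real.sqrt (a/2) * Real.exp (-(y r)) := by
    intro r hr
    have hrr₀ : r₀ ≤ r := le_trans hr₀r₁ hr
    have hyr : y r ≤ y r₀ - Real.log 2 / 2 := by
      have h1 := stepA r hrr₀
      have h2 : m * (r - r₀) ≤ -(Real.log 2 / 2) := by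
        have hmn : 0 < -m := by linarith
        have h3 : Real.log 2 / (2 * (-m)) ≤ r - r₀ := by rw [hr₁] at hr; linarith
        calc m * (r - r₀) ≤ m * (Real.log 2 / (2 * (-m))) :=
              mul_le_mul_of_nonpos_left h3 (le_of_lt hmneg)
          _ = -(Real.log 2 / 2) := by field_simp
      linarith
    have hexp : 2 * Real.exp (-2 * y r₀) ≤ Real.exp (-2 * y r) := by
      have h5 : -2 * y r₀ + Real.log 2 ≤ -2 * y r := by linarith
      calc 2 * Real.exp (-2 * y r₀) = Real.exp (-2 * y r₀ + Real.log 2) := by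
            rw [Real.exp_add, Real.exp_log two_pos]; ring
        _ ≤ Real.exp (-2 * y r) := Real.exp_le_exp.mpr h5
    have hsq : (a/2) * Real.exp (-2 * y r) ≤ (deriv y r)^2 := by
      have := stepB r hrr₀
      nlinarith [Real.exp_pos (-2 * y r₀)]
    have hs : Real.sqrt (a/2) * Real.exp (-(y r)) =
        Real.sqrt ((a/2) * Real.exp (-2 * y r)) := by
      rw [Real.sqrt_mul (by positivity)]
      congr 1
      rw [show (-2 : ℝ) * y r = (-(y r)) + (-(y r)) by ring, Real.exp_add,
        Real.sqrt_mul_self (Real.exp_pos _).le]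
    have hyrneg : deriv y r < 0 := lt_of_le_of_lt (hyneg r hrr₀) hmneg
    have hsnn : 0 ≤ Real.sqrt ((a/2) * Real.exp (-2 * y r)) := Real.sqrt_nonneg _
    have hsq2 : (Real.sqrt ((a/2) * Real.exp (-2 * y r)))^2 ≤ (deriv y r)^2 := by
      rw [Real.sq_sqrt (by positivity)]; exact hsq
    rw [neg_mul, hs]
    nlinarith [hsq2, hsnn, hyrneg]
  -- Step D
  have hc : 0 < Real.sqrt (a/2) := Real.sqrt_pos.mpr (by linarith)
  have hD : AntitoneOn (fun r => Real.exp (y r) + Real.sqrt (a/2) * r) (Ici r₁) := by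
    apply antitoneOn_of_deriv_nonpos (convex_Ici r₁)
    · exact ((Real.continuous_exp.comp hy1.continuous).add
        (continuous_const.mul continuous_id)).continuousOn
    · intro x _
      exact ((hy1 x).exp.add (by fun_prop)).differentiableWithinAt
    · intro x hx
      rw [interior_Ici] at hx
      have h1 : HasDerivAt (fun r => Real.exp (y r) + Real.sqrt (a/2) * r)
          (Real.exp (y x) * deriv y x + Real.sqrt (a/2) * 1) x :=
        ((hy1 x).hasDerivAt.exp).add (((hasDerivAt_id x).const_mul (Real.sqrt (a/2))))
      rw [h1.deriv]
      have hx1 := stepC x (le_of_lt hx)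
      have h2 : Real.exp (y x) * deriv y x ≤
          Real.exp (y x) * (-Real.sqrt (a/2) * Real.exp (-(y x))) :=
        mul_le_mul_of_nonneg_left hx1 (Real.exp_pos _).le
      have h3 : Real.exp (y x) * (-Real.sqrt (a/2) * Real.exp (-(y x))) = -Real.sqrt (a/2) := by
        rw [show Real.exp (y x) * (-Real.sqrt (a/2) * Real.exp (-(y x)))
          = -Real.sqrt (a/2) * (Real.exp (y x) * Real.exp (-(y x))) by ring,
          ← Real.exp_add]
        simp
      rw [h3] at h2
      linarith
  -- contradiction
  obtain ⟨R, hR⟩ : ∃ R, R = r₁ + (Real.exp (y r₁) + 1) / Real.sqrt (a/2) := ⟨_, rfl⟩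
  have hdiv : 0 ≤ (Real.exp (y r₁) + 1) / Real.sqrt (a/2) := div_nonneg (by positivity) hc.le
  have hRr₁ : r₁ ≤ R := by rw [hR]; linarith
  have hfin := hD (mem_Ici.mpr le_rfl) (mem_Ici.mpr hRr₁) hRr₁
  simp only at hfin
  have hkey : Real.sqrt (a/2) * R = Real.sqrt (a/2) * r₁ + (Real.exp (y r₁) + 1) := by
    rw [hR]; field_simp
  have := Real.exp_pos (y R)
  nlinarith

/-- There is no globally defined `C²` function `y : ℝ → ℝ` satisfying
`y'' ≤ -a e^{-2y}` for a constant `a > 0`. -/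
theorem no_global_solution (a : ℝ) (ha : 0 < a) (y : ℝ → ℝ) (hy : ContDiff ℝ 2 y)
    (h : ∀ r : ℝ, deriv (deriv y) r ≤ -a * Real.exp (-2 * y r)) : False := by
  have hdd : ∀ r, deriv (deriv y) r < 0 := fun r =>
    (h r).trans_lt (by nlinarith [Real.exp_pos (-2 * y r)])
  have hanti : StrictAnti (deriv y) := strictAnti_of_deriv_neg hdd
  by_cases h1 : deriv y 1 < 0
  · exact key a ha y hy h 1 h1
  · push_neg at h1
    have h0 : 0 < deriv y 0 := lt_of_le_of_lt h1 (hanti one_pos)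
    have hzc : ContDiff ℝ 2 (fun r => y (-r)) := hy.comp contDiff_neg
    have hdz : ∀ r : ℝ, deriv (fun r => y (-r)) r = -deriv y (-r) := fun r => deriv_comp_neg y r
    have hddz : ∀ r : ℝ, deriv (deriv (fun r => y (-r))) r = deriv (deriv y) (-r) := by
      intro r
      rw [funext hdz, deriv.fun_neg, deriv_comp_neg]
      ring
    have hzh : ∀ r : ℝ, deriv (deriv (fun r => y (-r))) r ≤
        -a * Real.exp (-2 * (fun r => y (-r)) r) := by
      intro r; rw [hddz]; exact h (-r)
    exact key a ha (fun r => y (-r)) hzc hzh 0 (by rw [hdz]; simp; linarith)
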